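/- If (V, Q) is a closure system, then the set D(V, Q) of all partitions of V whose blocks are all closed sets, ordered by refinement, is a complete lattice with greatest element {V}. -/
import Mathlib


variable {V : Type*}

/-- `Q` is a closure system on `V`: it contains `V` and is closed under
intersections of nonempty subfamilies. -/
def IsClosureSystem (Q : Set (Set V)) : Prop :=
  Set.univ ∈ Q ∧ ∀ F ⊆ Q, F.Nonempty → ⋂₀ F ∈ Q

/-- Algebraic: the union of any nonempty chain of closed sets is closed. -/
def IsAlgebraicSystem (Q : Set (Set V)) : Prop :=
  ∀ C ⊆ Q, C.Nonempty → IsChain (· ⊆ ·) C → ⋃₀ C ∈ Q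

/-- Condition (I₀): the empty set and all singletons are closed. -/
def CondI0 (Q : Set (Set V)) : Prop := ∅ ∈ Q ∧ ∀ x : V, {x} ∈ Q

/-- Condition (I₁): the union of two intersecting members is a member. -/
def CondI1 (Q : Set (Set V)) : Prop :=
  ∀ A ∈ Q, ∀ B ∈ Q, (A ∩ B).Nonempty → A ∪ B ∈ Q

/-- Condition (I₂): differences of properly overlapping members are members. -/
def CondI2 (Q : Set (Set V)) : Prop :=
  ∀ A ∈ Q, ∀ B ∈ Q, (A ∩ B).Nonempty → ¬ A ⊆ B → ¬ B ⊆ A → A \ B ∈ Q ∧ B \ A ∈ Q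

/-- An interval system: an algebraic closure system satisfying (I₀), (I₁), (I₂). -/
def IsIntervalSystem (Q : Set (Set V)) : Prop :=
  IsClosureSystem Q ∧ IsAlgebraicSystem Q ∧ CondI0 Q ∧ CondI1 Q ∧ CondI2 Q

/-- `A` is a strong set of the closure system `Q`. -/
def IsStrong (Q : Set (Set V)) (A : Set V) : Prop :=
  A ∈ Q ∧ ∀ B ∈ Q, (A ∩ B).Nonempty → A ⊆ B ∨ B ⊆ A

/-- A decomposition: a partition of `V` (coded as a setoid) all of whose
blocks belong to `Q`.  The refinement order on partitions corresponds to the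
order on `Setoid V` (finer below). -/
def IsDecomp (Q : Set (Set V)) (π : Setoid V) : Prop :=
  ∀ x : V, {y | π.r x y} ∈ Q

/-- The lattice `D(V,Q)` of decompositions, as a subtype of `Setoid V`
with the induced (refinement) partial order. -/
abbrev Decomp (Q : Set (Set V)) := {π : Setoid V // IsDecomp Q π}

/-- For a closure system `(V,Q)`, the decompositions of `V`, ordered by
refinement, form a complete lattice whose greatest element is `{V}`
(the top partition). -/
theorem stmt4 (Q : Set (Set V)) (hC : IsClosureSystem Q) :
    ∃ inst : CompleteLattice (Decomp Q),
      (∀ a b : Decomp Q, inst.le a b ↔ a.1 ≤ b.1) ∧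
        (inst.top : Decomp Q).1 = (⊤ : Setoid V) := by
  have hmem : ∀ S : Set (Decomp Q), IsDecomp Q (sInf (Subtype.val '' S)) := by
    intro S x
    rcases S.eq_empty_or_nonempty with h | h
    · subst h
      have : {y | (sInf (Subtype.val '' (∅ : Set (Decomp Q)))).r x y} = Set.univ := by
        ext y
        simp [Setoid.sInf_iff]
      rw [this]; exact hC.1
    · have : {y | (sInf (Subtype.val '' S)).r x y}
          = ⋂₀ ((fun π : Setoid V => {y | π.r x y}) '' (Subtype.val '' S)) := by
        ext y
        simp only [Set.mem_sInter, Set.mem_image, Setoid.sInf_iff, Set.mem_setOf_eq]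
        constructor
        · rintro hy _ ⟨π, hπ, rfl⟩; exact hy π hπ
        · intro hy π hπ; exact hy _ ⟨π, hπ, rfl⟩
      rw [this]
      refine hC.2 _ ?_ ?_
      · rintro _ ⟨_, ⟨⟨π, hπ⟩, _, rfl⟩, rfl⟩; exact hπ x
      · exact (h.image _).image _
  letI : InfSet (Decomp Q) := ⟨fun S => ⟨sInf (Subtype.val '' S), hmem S⟩⟩
  have hglb : ∀ S : Set (Decomp Q), IsGLB S (sInf S) := by
    intro S
    constructor
    · intro a ha
      show sInf (Subtype.val '' S) ≤ a.1
      exact sInf_le ⟨a, ha, rfl⟩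
    · intro b hb
      show b.1 ≤ sInf (Subtype.val '' S)
      refine le_sInf ?_
      rintro _ ⟨a, ha, rfl⟩
      exact hb ha
  refine ⟨completeLatticeOfInf (Decomp Q) hglb, fun a b => Iff.rfl, ?_⟩
  show sInf (Subtype.val '' (∅ : Set (Decomp Q))) = (⊤ : Setoid V)
  simp
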